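/- Let m > n be positive odd integers, Y = {(i,j) ∈ R_{m-1,n-1} : i + j < (m+n)/2}, and for A ⊆ [n-1] let Y_A = Y ∪ {((m+n)/2 - a, a) : a ∈ A}. Then S(R_{m-1,n-1}) = Σ_{A ⊆ [n-1]} S(Y_{n - A^c}) · S(Y_A), where A^c = [n-1]\A and n - B = {n - i : i ∈ B}. -/

import Mathlib

open Finset

attribute [local instance] Classical.propDecidable

/-- A domino `{(i,j),(i+1,j)}` is horizontal. -/
def Horiz (d : Finset (ℤ × ℤ)) : Prop := ∃ i j : ℤ, d = {(i, j), (i + 1, j)}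

/-- A domino `{(i,j),(i,j+1)}` is vertical. -/
def Vert (d : Finset (ℤ × ℤ)) : Prop := ∃ i j : ℤ, d = {(i, j), (i, j + 1)}

/-- `D` is a domino tiling of the board `X`. -/
def IsTiling (X : Finset (ℤ × ℤ)) (D : Finset (Finset (ℤ × ℤ))) : Prop :=
  (∀ d ∈ D, Horiz d ∨ Vert d) ∧ (∀ d ∈ D, d ⊆ X) ∧ ∀ p ∈ X, ∃! d, d ∈ D ∧ p ∈ d

/-- The finite set of all domino tilings of a board `X`. -/
noncomputable def tilings (X : Finset (ℤ × ℤ)) : Finset (Finset (Finset (ℤ × ℤ))) :=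
  X.powerset.powerset.filter (IsTiling X)

/-- The number of horizontal dominoes in a tiling. -/
noncomputable def hcount (D : Finset (Finset (ℤ × ℤ))) : ℕ := (D.filter Horiz).card

/-- `S(X) = ∑_{D ∈ D(X)} i^{h(D)}`. -/
noncomputable def Scomp (X : Finset (ℤ × ℤ)) : ℂ :=
  ∑ D ∈ tilings X, Complex.I ^ hcount D

/-- The rectangle `[1,a] × [1,b]` in `ℤ × ℤ`. -/
noncomputable def rect (a b : ℤ) : Finset (ℤ × ℤ) := Finset.Icc 1 a ×ˢ Finset.Icc 1 b

/-- The lower-left half `Y` of the rectangle `R_{m-1,n-1}`. -/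
noncomputable def Yb (m n : ℕ) : Finset (ℤ × ℤ) :=
  (rect ((m : ℤ) - 1) ((n : ℤ) - 1)).filter (fun p => p.1 + p.2 < ((m : ℤ) + n) / 2)

/-- `Y_A = Y ∪ {((m+n)/2 - a, a) : a ∈ A}`. -/
noncomputable def YA (m n : ℕ) (A : Finset ℕ) : Finset (ℤ × ℤ) :=
  Yb m n ∪ A.image (fun a => (((m : ℤ) + n) / 2 - a, (a : ℤ)))

/-! ### Auxiliary lemmas -/

lemma shape {d : Finset (ℤ × ℤ)} (h : Horiz d ∨ Vert d) :
    ∃ p q : ℤ × ℤ, d = {p, q} ∧ q.1 + q.2 = p.1 + p.2 + 1 := by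
  rcases h with ⟨i, j, rfl⟩ | ⟨i, j, rfl⟩
  · exact ⟨(i, j), (i + 1, j), rfl, by ring⟩
  · exact ⟨(i, j), (i, j + 1), rfl, by ring⟩

lemma shape_nonempty {d : Finset (ℤ × ℤ)} (h : Horiz d ∨ Vert d) : d.Nonempty := by
  obtain ⟨p, q, rfl, -⟩ := shape h
  exact ⟨p, by simp⟩

lemma domino_sums {d : Finset (ℤ × ℤ)} (h : Horiz d ∨ Vert d) {p q : ℤ × ℤ}
    (hp : p ∈ d) (hq : q ∈ d) : q.1 + q.2 ≤ p.1 + p.2 + 1 ∧ p.1 + p.2 ≤ q.1 + q.2 + 1 := by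
  obtain ⟨x, y, rfl, hs⟩ := shape h
  simp only [mem_insert, mem_singleton] at hp hq
  rcases hp with rfl | rfl <;> rcases hq with rfl | rfl <;> omega

lemma mem_tilings {X : Finset (ℤ × ℤ)} {D : Finset (Finset (ℤ × ℤ))} :
    D ∈ tilings X ↔ IsTiling X D := by
  unfold tilings
  simp only [mem_filter, mem_powerset, and_iff_right_iff_imp]
  intro hT d hd
  rw [mem_powerset]
  exact hT.2.1 d hd

lemma hcount_union {D₁ D₂ : Finset (Finset (ℤ × ℤ))} (h : Disjoint D₁ D₂) :
    hcount (D₁ ∪ D₂) = hcount D₁ + hcount D₂ := by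
  unfold hcount
  rw [filter_union, card_union_of_disjoint (disjoint_filter_filter h)]

/-! ### Rotation by 180 degrees -/

def rho (m n : ℕ) (p : ℤ × ℤ) : ℤ × ℤ := ((m : ℤ) - p.1, (n : ℤ) - p.2)

lemma rho_rho {m n : ℕ} (p : ℤ × ℤ) : rho m n (rho m n p) = p := by
  simp [rho]

lemma mem_image_rho {m n : ℕ} {S : Finset (ℤ × ℤ)} {p : ℤ × ℤ} :
    p ∈ S.image (rho m n) ↔ rho m n p ∈ S := by
  constructor
  · intro h
    obtain ⟨q, hq, rfl⟩ := mem_image.1 h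
    rwa [rho_rho]
  · intro h
    exact mem_image.2 ⟨_, h, rho_rho p⟩

lemma image_rho_rho {m n : ℕ} {S : Finset (ℤ × ℤ)} :
    (S.image (rho m n)).image (rho m n) = S := by
  rw [image_image]
  have h : (rho m n ∘ rho m n) = id := funext fun p => rho_rho p
  rw [h, image_id]

lemma horiz_image_rho {m n : ℕ} {d : Finset (ℤ × ℤ)} (h : Horiz d) :
    Horiz (d.image (rho m n)) := by
  obtain ⟨i, j, rfl⟩ := h
  refine ⟨(m : ℤ) - i - 1, (n : ℤ) - j, ?_⟩
  rw [image_insert, image_singleton]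
  simp only [rho]
  rw [pair_comm]
  norm_num
  congr 1
  ring

lemma vert_image_rho {m n : ℕ} {d : Finset (ℤ × ℤ)} (h : Vert d) :
    Vert (d.image (rho m n)) := by
  obtain ⟨i, j, rfl⟩ := h
  refine ⟨(m : ℤ) - i, (n : ℤ) - j - 1, ?_⟩
  rw [image_insert, image_singleton]
  simp only [rho]
  rw [pair_comm]
  norm_num
  congr 1
  ring

lemma horiz_image_iff {m n : ℕ} {d : Finset (ℤ × ℤ)} :
    Horiz (d.image (rho m n)) ↔ Horiz d := by
  constructor
  · intro h
    have := horiz_image_rho (m := m) (n := n) h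
    rwa [image_rho_rho] at this
  · exact horiz_image_rho

lemma Dimage_rho_rho {m n : ℕ} {D : Finset (Finset (ℤ × ℤ))} :
    (D.image (fun d => d.image (rho m n))).image (fun d => d.image (rho m n)) = D := by
  rw [image_image]
  have h : ((fun d : Finset (ℤ × ℤ) => d.image (rho m n)) ∘
      (fun d : Finset (ℤ × ℤ) => d.image (rho m n))) = id :=
    funext fun d => image_rho_rho
  rw [h, image_id]

lemma isTiling_image {m n : ℕ} {X : Finset (ℤ × ℤ)} {D : Finset (Finset (ℤ × ℤ))}
    (h : IsTiling X D) :
    IsTiling (X.image (rho m n)) (D.image (fun d => d.image (rho m n))) := by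
  obtain ⟨h1, h2, h3⟩ := h
  refine ⟨?_, ?_, ?_⟩
  · intro d hd
    obtain ⟨e, he, rfl⟩ := mem_image.1 hd
    rcases h1 e he with he' | he'
    · exact Or.inl (horiz_image_rho he')
    · exact Or.inr (vert_image_rho he')
  · intro d hd
    obtain ⟨e, he, rfl⟩ := mem_image.1 hd
    exact image_subset_image (h2 e he)
  · intro p hp
    rw [mem_image_rho] at hp
    obtain ⟨d, ⟨hdD, hdp⟩, hun⟩ := h3 _ hp
    refine ⟨d.image (rho m n), ⟨mem_image_of_mem _ hdD, mem_image_rho.2 hdp⟩, ?_⟩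
    rintro d' ⟨hd', hp'⟩
    obtain ⟨e, he, rfl⟩ := mem_image.1 hd'
    rw [mem_image_rho] at hp'
    rw [hun e ⟨he, hp'⟩]

lemma tilings_image {m n : ℕ} {X : Finset (ℤ × ℤ)} :
    tilings (X.image (rho m n)) =
      (tilings X).image (fun D => D.image (fun d => d.image (rho m n))) := by
  ext D
  rw [mem_tilings]
  constructor
  · intro h
    refine mem_image.2 ⟨D.image (fun d => d.image (rho m n)), ?_, Dimage_rho_rho⟩
    rw [mem_tilings]
    have := isTiling_image (m := m) (n := n) h
    rwa [image_rho_rho] at this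
  · intro h
    obtain ⟨E, hE, rfl⟩ := mem_image.1 h
    exact isTiling_image (mem_tilings.1 hE)

lemma hcount_image {m n : ℕ} {D : Finset (Finset (ℤ × ℤ))} :
    hcount (D.image (fun d => d.image (rho m n))) = hcount D := by
  unfold hcount
  rw [filter_image]
  rw [card_image_of_injective _ (fun a b hab => by
    have := congrArg (fun S : Finset (ℤ × ℤ) => S.image (rho m n)) hab
    simpa [image_rho_rho] using this)]
  congr 1
  exact filter_congr fun d _ => by rw [horiz_image_iff]

lemma Scomp_image_rho {m n : ℕ} {X : Finset (ℤ × ℤ)} :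
    Scomp (X.image (rho m n)) = Scomp X := by
  unfold Scomp
  rw [tilings_image (m := m) (n := n), Finset.sum_image ?inj]
  · exact Finset.sum_congr rfl fun D _ => by rw [hcount_image]
  · intro a _ b _ h
    have := congrArg (fun D : Finset (Finset (ℤ × ℤ)) => D.image (fun d => d.image (rho m n))) h
    simpa [Dimage_rho_rho] using this

/-! ### The split along the diagonal -/

noncomputable def lowD (m n : ℕ) (D : Finset (Finset (ℤ × ℤ))) : Finset (Finset (ℤ × ℤ)) :=
  D.filter (fun d => ∀ p ∈ d, p.1 + p.2 ≤ ((m : ℤ) + n) / 2)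

noncomputable def highD (m n : ℕ) (D : Finset (Finset (ℤ × ℤ))) : Finset (Finset (ℤ × ℤ)) :=
  D.filter (fun d => ¬ ∀ p ∈ d, p.1 + p.2 ≤ ((m : ℤ) + n) / 2)

noncomputable def cutA (m n : ℕ) (D : Finset (Finset (ℤ × ℤ))) : Finset ℕ :=
  (Finset.Icc 1 (n - 1)).filter
    (fun a => ∃ d ∈ lowD m n D, (((m : ℤ) + n) / 2 - a, (a : ℤ)) ∈ d)

lemma mem_rect {a b : ℤ} {p : ℤ × ℤ} :
    p ∈ rect a b ↔ (1 ≤ p.1 ∧ p.1 ≤ a) ∧ (1 ≤ p.2 ∧ p.2 ≤ b) := by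
  simp [rect, Finset.mem_product, Finset.mem_Icc, and_assoc]

lemma mem_Yb {m n : ℕ} {p : ℤ × ℤ} :
    p ∈ Yb m n ↔ p ∈ rect ((m : ℤ) - 1) ((n : ℤ) - 1) ∧ p.1 + p.2 < ((m : ℤ) + n) / 2 :=
  Finset.mem_filter

lemma mem_YA {m n : ℕ} {A : Finset ℕ} {p : ℤ × ℤ} :
    p ∈ YA m n A ↔ p ∈ Yb m n ∨ ∃ a : ℕ, a ∈ A ∧ p = (((m : ℤ) + n) / 2 - (a : ℤ), (a : ℤ)) := by
  simp [YA, eq_comm]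

lemma dp_mem_R {m n : ℕ} (hm2 : (n : ℤ) + 2 ≤ (m : ℤ))
    {a : ℕ} (ha : a ∈ Finset.Icc 1 (n - 1)) :
    ((((m : ℤ) + n) / 2 - a, (a : ℤ))) ∈ rect ((m : ℤ) - 1) ((n : ℤ) - 1) := by
  rw [Finset.mem_Icc] at ha
  rw [mem_rect]
  dsimp only
  omega

lemma YA_subset {m n : ℕ} {A : Finset ℕ} (hm2 : (n : ℤ) + 2 ≤ (m : ℤ))
    (hA : A ⊆ Finset.Icc 1 (n - 1)) :
    YA m n A ⊆ rect ((m : ℤ) - 1) ((n : ℤ) - 1) := by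
  intro p hp
  rcases mem_YA.1 hp with h | ⟨a, ha, rfl⟩
  · exact (mem_Yb.1 h).1
  · exact dp_mem_R hm2 (hA ha)

lemma YA_sum_le {m n : ℕ} {A : Finset ℕ} {p : ℤ × ℤ} (hp : p ∈ YA m n A) :
    p.1 + p.2 ≤ ((m : ℤ) + n) / 2 := by
  rcases mem_YA.1 hp with h | ⟨a, ha, rfl⟩
  · exact le_of_lt (mem_Yb.1 h).2
  · dsimp only
    omega

lemma eq_dp_of_sum_eq {m n : ℕ} {p : ℤ × ℤ} (hp : p ∈ rect ((m : ℤ) - 1) ((n : ℤ) - 1))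
    (hs : p.1 + p.2 = ((m : ℤ) + n) / 2) :
    ∃ a : ℕ, a ∈ Finset.Icc 1 (n - 1) ∧ p = (((m : ℤ) + n) / 2 - (a : ℤ), (a : ℤ)) := by
  rw [mem_rect] at hp
  obtain ⟨x, y⟩ := p
  dsimp only at hp hs
  refine ⟨y.toNat, ?_, ?_⟩
  · rw [Finset.mem_Icc]
    omega
  · have h1 : (y.toNat : ℤ) = y := Int.toNat_of_nonneg (by omega)
    rw [Prod.mk.injEq]
    omega

lemma dp_mem_YA_iff {m n : ℕ} {A : Finset ℕ} {a : ℕ} :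
    ((((m : ℤ) + n) / 2 - (a : ℤ), (a : ℤ))) ∈ YA m n A ↔ a ∈ A := by
  rw [mem_YA]
  constructor
  · rintro (h | ⟨b, hb, he⟩)
    · exfalso
      have := (mem_Yb.1 h).2
      dsimp only at this
      omega
    · rw [Prod.mk.injEq] at he
      have : a = b := by exact_mod_cast he.2
      rwa [this]
  · intro h
    exact Or.inr ⟨a, h, rfl⟩

lemma mem_YA_char {m n : ℕ} (hm2 : (n : ℤ) + 2 ≤ (m : ℤ)) {A : Finset ℕ}
    (hA : A ⊆ Finset.Icc 1 (n - 1)) {p : ℤ × ℤ} :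
    p ∈ YA m n A ↔ p ∈ rect ((m : ℤ) - 1) ((n : ℤ) - 1) ∧
      (p.1 + p.2 < ((m : ℤ) + n) / 2 ∨
        (p.1 + p.2 = ((m : ℤ) + n) / 2 ∧ ∃ a : ℕ, a ∈ A ∧ (a : ℤ) = p.2)) := by
  constructor
  · intro hp
    rcases mem_YA.1 hp with h | ⟨a, ha, rfl⟩
    · exact ⟨(mem_Yb.1 h).1, Or.inl (mem_Yb.1 h).2⟩
    · exact ⟨dp_mem_R hm2 (hA ha), Or.inr ⟨by dsimp only; ring, a, ha, rfl⟩⟩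
  · rintro ⟨hR, hs | ⟨hs, a, ha, hay⟩⟩
    · exact mem_YA.2 (Or.inl (mem_Yb.2 ⟨hR, hs⟩))
    · refine mem_YA.2 (Or.inr ⟨a, ha, ?_⟩)
      obtain ⟨x, y⟩ := p
      dsimp only at hs hay
      rw [Prod.mk.injEq]
      omega

lemma cutA_subset {m n : ℕ} {D : Finset (Finset (ℤ × ℤ))} :
    cutA m n D ⊆ Finset.Icc 1 (n - 1) := filter_subset _ _

lemma low_tiling {m n : ℕ} (hm2 : (n : ℤ) + 2 ≤ (m : ℤ)) {D : Finset (Finset (ℤ × ℤ))}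
    (hD : IsTiling (rect ((m : ℤ) - 1) ((n : ℤ) - 1)) D) :
    IsTiling (YA m n (cutA m n D)) (lowD m n D) := by
  obtain ⟨hHV, hsub, hcov⟩ := hD
  refine ⟨fun d hd => hHV d (filter_subset _ _ hd), ?_, ?_⟩
  · intro d hd p hp
    rw [lowD, mem_filter] at hd
    have hpR := hsub d hd.1 hp
    have hple := hd.2 p hp
    rcases lt_or_eq_of_le hple with h | h
    · exact mem_YA.2 (Or.inl (mem_Yb.2 ⟨hpR, h⟩))
    · obtain ⟨a, ha, rfl⟩ := eq_dp_of_sum_eq hpR h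
      refine mem_YA.2 (Or.inr ⟨a, ?_, rfl⟩)
      rw [cutA, mem_filter]
      exact ⟨ha, d, mem_filter.2 hd, hp⟩
  · intro p hp
    have hpR := YA_subset hm2 cutA_subset hp
    obtain ⟨d, ⟨hdD, hpd⟩, huniq⟩ := hcov p hpR
    have hdlow : d ∈ lowD m n D := by
      rw [lowD, mem_filter]
      refine ⟨hdD, ?_⟩
      have hple := YA_sum_le hp
      rcases lt_or_eq_of_le hple with h | h
      · intro q hq
        have := (domino_sums (hHV d hdD) hpd hq).1
        omega
      · obtain ⟨a, haA, hpe⟩ := eq_dp_of_sum_eq hpR h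
        have haC : a ∈ cutA m n D := by
          rw [hpe] at hp
          rw [cutA, mem_filter]
          refine ⟨haA, ?_⟩
          have := dp_mem_YA_iff.1 hp
          rw [cutA, mem_filter] at this
          exact this.2
        rw [cutA, mem_filter] at haC
        obtain ⟨-, d', hd', hp'⟩ := haC
        have hde : d' = d := huniq d' ⟨(mem_filter.1 hd').1, by rwa [← hpe] at hp'⟩
        subst hde
        exact (mem_filter.1 hd').2
    exact ⟨d, ⟨hdlow, hpd⟩, fun d' hd' => huniq d' ⟨(mem_filter.1 hd'.1).1, hd'.2⟩⟩

lemma high_tiling {m n : ℕ} (hm2 : (n : ℤ) + 2 ≤ (m : ℤ)) {D : Finset (Finset (ℤ × ℤ))}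
    (hD : IsTiling (rect ((m : ℤ) - 1) ((n : ℤ) - 1)) D) :
    IsTiling (rect ((m : ℤ) - 1) ((n : ℤ) - 1) \ YA m n (cutA m n D)) (highD m n D) := by
  obtain ⟨hHV, hsub, hcov⟩ := hD
  refine ⟨fun d hd => hHV d (filter_subset _ _ hd), ?_, ?_⟩
  · intro d hd p hp
    rw [highD, mem_filter] at hd
    push_neg at hd
    obtain ⟨hdD, q, hq, hqc⟩ := hd
    have hpR := hsub d hdD hp
    have hpge : ((m : ℤ) + n) / 2 ≤ p.1 + p.2 := by
      have := (domino_sums (hHV d hdD) hp hq).1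
      omega
    rw [mem_sdiff]
    refine ⟨hpR, fun hpY => ?_⟩
    have hple := YA_sum_le hpY
    have hpe : p.1 + p.2 = ((m : ℤ) + n) / 2 := le_antisymm hple hpge
    obtain ⟨a, haA, hpe'⟩ := eq_dp_of_sum_eq hpR hpe
    rw [hpe'] at hpY
    have haC := dp_mem_YA_iff.1 hpY
    rw [cutA, mem_filter] at haC
    obtain ⟨-, d', hd', hp'⟩ := haC
    have hde : d' = d := by
      obtain ⟨e, -, hu⟩ := hcov p hpR
      rw [hu d' ⟨(mem_filter.1 hd').1, by rwa [← hpe'] at hp'⟩, hu d ⟨hdD, hp⟩]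
    subst hde
    have h2 := (mem_filter.1 hd').2 q hq
    omega
  · intro p hp
    rw [mem_sdiff] at hp
    obtain ⟨hpR, hpnY⟩ := hp
    obtain ⟨d, ⟨hdD, hpd⟩, huniq⟩ := hcov p hpR
    have hdhigh : d ∈ highD m n D := by
      rw [highD, mem_filter]
      refine ⟨hdD, fun hall => ?_⟩
      have hdlow : d ∈ lowD m n D := mem_filter.2 ⟨hdD, hall⟩
      have hpge : ((m : ℤ) + n) / 2 ≤ p.1 + p.2 := by
        by_contra h
        exact hpnY (mem_YA.2 (Or.inl (mem_Yb.2 ⟨hpR, by omega⟩)))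
      have hpe : p.1 + p.2 = ((m : ℤ) + n) / 2 := le_antisymm (hall p hpd) hpge
      obtain ⟨a, haA, hpe'⟩ := eq_dp_of_sum_eq hpR hpe
      apply hpnY
      rw [hpe']
      refine dp_mem_YA_iff.2 ?_
      rw [cutA, mem_filter]
      exact ⟨haA, d, hdlow, by rwa [← hpe']⟩
    exact ⟨d, ⟨hdhigh, hpd⟩, fun d' hd' => huniq d' ⟨(mem_filter.1 hd'.1).1, hd'.2⟩⟩

lemma union_tiling {m n : ℕ} (hm2 : (n : ℤ) + 2 ≤ (m : ℤ)) {A : Finset ℕ}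
    (hA : A ⊆ Finset.Icc 1 (n - 1)) {D₁ D₂ : Finset (Finset (ℤ × ℤ))}
    (h1 : IsTiling (YA m n A) D₁)
    (h2 : IsTiling (rect ((m : ℤ) - 1) ((n : ℤ) - 1) \ YA m n A) D₂) :
    Disjoint D₁ D₂ ∧
      IsTiling (rect ((m : ℤ) - 1) ((n : ℤ) - 1)) (D₁ ∪ D₂) ∧
      lowD m n (D₁ ∪ D₂) = D₁ ∧ highD m n (D₁ ∪ D₂) = D₂ ∧ cutA m n (D₁ ∪ D₂) = A := by
  obtain ⟨hHV1, hsub1, hcov1⟩ := h1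
  obtain ⟨hHV2, hsub2, hcov2⟩ := h2
  have hdisj : Disjoint D₁ D₂ := by
    rw [disjoint_left]
    intro d hd1 hd2
    obtain ⟨p, hp⟩ := shape_nonempty (hHV1 d hd1)
    have := hsub2 d hd2 hp
    rw [mem_sdiff] at this
    exact this.2 (hsub1 d hd1 hp)
  have hlow1 : ∀ d ∈ D₁, ∀ p ∈ d, p.1 + p.2 ≤ ((m : ℤ) + n) / 2 :=
    fun d hd p hp => YA_sum_le (hsub1 d hd hp)
  have hhigh2 : ∀ d ∈ D₂, ¬ ∀ p ∈ d, p.1 + p.2 ≤ ((m : ℤ) + n) / 2 := by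
    intro d hd hall
    obtain ⟨x, y, hxy, hs⟩ := shape (hHV2 d hd)
    have hxm : x ∈ d := by rw [hxy]; simp
    have hym : y ∈ d := by rw [hxy]; simp
    have hxS := hsub2 d hd hxm
    rw [mem_sdiff] at hxS
    have hxge : ((m : ℤ) + n) / 2 ≤ x.1 + x.2 := by
      by_contra h
      exact hxS.2 (mem_YA.2 (Or.inl (mem_Yb.2 ⟨hxS.1, by omega⟩)))
    have := hall y hym
    omega
  have hT : IsTiling (rect ((m : ℤ) - 1) ((n : ℤ) - 1)) (D₁ ∪ D₂) := by
    refine ⟨?_, ?_, ?_⟩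
    · intro d hd
      rcases mem_union.1 hd with h | h
      · exact hHV1 d h
      · exact hHV2 d h
    · intro d hd
      rcases mem_union.1 hd with h | h
      · exact (hsub1 d h).trans (YA_subset hm2 hA)
      · exact (hsub2 d h).trans (sdiff_subset)
    · intro p hp
      by_cases hpY : p ∈ YA m n A
      · obtain ⟨d, ⟨hd, hpd⟩, hu⟩ := hcov1 p hpY
        refine ⟨d, ⟨mem_union_left _ hd, hpd⟩, ?_⟩
        rintro d' ⟨hd', hp'⟩
        rcases mem_union.1 hd' with h | h
        · exact hu d' ⟨h, hp'⟩
        · exfalso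
          have := hsub2 d' h hp'
          rw [mem_sdiff] at this
          exact this.2 hpY
      · obtain ⟨d, ⟨hd, hpd⟩, hu⟩ := hcov2 p (mem_sdiff.2 ⟨hp, hpY⟩)
        refine ⟨d, ⟨mem_union_right _ hd, hpd⟩, ?_⟩
        rintro d' ⟨hd', hp'⟩
        rcases mem_union.1 hd' with h | h
        · exact absurd (hsub1 d' h hp') hpY
        · exact hu d' ⟨h, hp'⟩
  have hlowe : lowD m n (D₁ ∪ D₂) = D₁ := by
    ext d
    rw [lowD, mem_filter, mem_union]
    constructor
    · rintro ⟨h | h, hall⟩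
      · exact h
      · exact absurd hall (hhigh2 d h)
    · intro h
      exact ⟨Or.inl h, hlow1 d h⟩
  have hhighe : highD m n (D₁ ∪ D₂) = D₂ := by
    have : highD m n (D₁ ∪ D₂) = (D₁ ∪ D₂) \ lowD m n (D₁ ∪ D₂) := by
      rw [highD, lowD, filter_not]
    rw [this, hlowe, union_sdiff_cancel_left hdisj]
  refine ⟨hdisj, hT, hlowe, hhighe, ?_⟩
  ext a
  rw [cutA, mem_filter, hlowe]
  constructor
  · rintro ⟨ha, d, hd, hpd⟩
    have := hsub1 d hd hpd
    exact dp_mem_YA_iff.1 this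
  · intro ha
    have haI := hA ha
    have hdp : (((m : ℤ) + n) / 2 - (a : ℤ), (a : ℤ)) ∈ YA m n A := dp_mem_YA_iff.2 ha
    obtain ⟨d, ⟨hd, hpd⟩, -⟩ := hcov1 _ hdp
    exact ⟨haI, d, hd, hpd⟩

lemma fiber_eq {m n : ℕ} (hm2 : (n : ℤ) + 2 ≤ (m : ℤ)) {A : Finset ℕ}
    (hA : A ⊆ Finset.Icc 1 (n - 1)) :
    ∑ D ∈ (tilings (rect ((m : ℤ) - 1) ((n : ℤ) - 1))).filter (fun D => cutA m n D = A),
        Complex.I ^ hcount D =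
      Scomp (rect ((m : ℤ) - 1) ((n : ℤ) - 1) \ YA m n A) * Scomp (YA m n A) := by
  rw [Scomp, Scomp, Finset.sum_mul_sum, ← Finset.sum_product']
  refine Finset.sum_nbij' (i := fun D => (highD m n D, lowD m n D))
    (j := fun q => q.2 ∪ q.1) ?_ ?_ ?_ ?_ ?_
  · intro D hD
    rw [mem_filter] at hD
    obtain ⟨hDt, hcut⟩ := hD
    have hT := mem_tilings.1 hDt
    rw [mem_product]
    constructor
    · rw [mem_tilings]
      have := high_tiling hm2 hT
      rwa [hcut] at this
    · rw [mem_tilings]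
      have := low_tiling hm2 hT
      rwa [hcut] at this
  · intro q hq
    rw [mem_product] at hq
    obtain ⟨-, hT, -, -, hcut⟩ := union_tiling hm2 hA (mem_tilings.1 hq.2) (mem_tilings.1 hq.1)
    rw [mem_filter, mem_tilings]
    exact ⟨hT, hcut⟩
  · intro D hD
    exact filter_union_filter_not_eq _ D
  · intro q hq
    rw [mem_product] at hq
    obtain ⟨-, -, hl, hh, -⟩ :=
      union_tiling hm2 hA (mem_tilings.1 hq.2) (mem_tilings.1 hq.1)
    rw [Prod.mk.injEq]
    exact ⟨hh, hl⟩
  · intro D hD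
    have hdisj : Disjoint (lowD m n D) (highD m n D) := disjoint_filter_filter_not D D _
    have : D = lowD m n D ∪ highD m n D := (filter_union_filter_not_eq _ D).symm
    dsimp only
    rw [show hcount D = hcount (highD m n D) + hcount (lowD m n D) by
      conv_lhs => rw [this]
      rw [hcount_union hdisj]
      ring]
    rw [pow_add]

lemma image_rho_YA {m n : ℕ} (hc2 : (m : ℤ) + n = 2 * (((m : ℤ) + n) / 2))
    (hm2 : (n : ℤ) + 2 ≤ (m : ℤ)) {A : Finset ℕ} (hA : A ⊆ Finset.Icc 1 (n - 1)) :
    (YA m n ((Finset.Icc 1 (n - 1) \ A).image (fun i => n - i))).image (rho m n) =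
      rect ((m : ℤ) - 1) ((n : ℤ) - 1) \ YA m n A := by
  have hB : ((Finset.Icc 1 (n - 1) \ A).image (fun i => n - i)) ⊆ Finset.Icc 1 (n - 1) := by
    intro b hb
    obtain ⟨i, hi, rfl⟩ := mem_image.1 hb
    rw [mem_sdiff, Finset.mem_Icc] at hi
    rw [Finset.mem_Icc]
    omega
  ext p
  rw [mem_image_rho, mem_sdiff, mem_YA_char hm2 hB, mem_YA_char hm2 hA]
  obtain ⟨x, y⟩ := p
  simp only [rho, mem_rect, mem_image, mem_sdiff, Finset.mem_Icc]
  constructor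
  · rintro ⟨hR, h⟩
    have hpR : (1 ≤ x ∧ x ≤ (m : ℤ) - 1) ∧ 1 ≤ y ∧ y ≤ (n : ℤ) - 1 := by omega
    refine ⟨hpR, ?_⟩
    rcases h with h1 | ⟨h2, b, ⟨i, hi, rfl⟩, hby⟩
    · rintro ⟨-, h' | ⟨h', -⟩⟩ <;> omega
    · have hni : ((n - i : ℕ) : ℤ) = (n : ℤ) - i := by
        have := hi.1.2
        omega
      rintro ⟨-, h' | ⟨-, a, haA, hay⟩⟩
      · omega
      · have : a = i := by omega
        exact hi.2 (this ▸ haA)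
  · rintro ⟨hpR, hnot⟩
    have hge : ((m : ℤ) + n) / 2 ≤ x + y := by
      by_contra h
      exact hnot ⟨hpR, Or.inl (by omega)⟩
    refine ⟨by omega, ?_⟩
    rcases lt_or_eq_of_le hge with h | h
    · exact Or.inl (by omega)
    · have hyA : y.toNat ∉ A := by
        intro hmem
        exact hnot ⟨hpR, Or.inr ⟨by omega, y.toNat, hmem, by omega⟩⟩
      refine Or.inr ⟨by omega, n - y.toNat, ⟨y.toNat, ⟨⟨by omega, by omega⟩, hyA⟩, rfl⟩, by omega⟩

theorem stmt15 (m n : ℕ) (hmo : Odd m) (hno : Odd n) (hlt : n < m) (hn : 0 < n) :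
    Scomp (rect ((m : ℤ) - 1) ((n : ℤ) - 1)) =
      ∑ A ∈ (Finset.Icc 1 (n - 1)).powerset,
        Scomp (YA m n ((Finset.Icc 1 (n - 1) \ A).image (fun i => n - i))) *
          Scomp (YA m n A) := by
  obtain ⟨a, ha⟩ := hmo
  obtain ⟨b, hb⟩ := hno
  have hm2 : (n : ℤ) + 2 ≤ (m : ℤ) := by omega
  have hc2 : (m : ℤ) + n = 2 * (((m : ℤ) + n) / 2) := by omega
  rw [Scomp]
  rw [← Finset.sum_fiberwise_of_maps_to (g := cutA m n) (t := (Finset.Icc 1 (n - 1)).powerset)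
      (fun D _ => mem_powerset.2 cutA_subset) (fun D => Complex.I ^ hcount D)]
  refine Finset.sum_congr rfl fun A hA => ?_
  have hA' := mem_powerset.1 hA
  rw [fiber_eq hm2 hA', ← image_rho_YA hc2 hm2 hA', Scomp_image_rho]
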